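/- Let G be a finite group. For each complex irreducible character χ of G, define θ_χ(a) = Σ_{b∈G} |C_G(ab)b ∩ C_G(a)| · χ([a,b]) and m_χ = Σ_{a∈G} θ_χ(a). Then for every g ∈ G, f_3(g) = (1/|G|) · Σ_{χ∈Irr(G)} m_χ · χ(g). -/

import Mathlib

set_option maxHeartbeats 1600000

/-- `χ` is the character of an irreducible complex representation of `G`. -/
def IsIrredChar (G : Type) [Group G] (χ : G → ℂ) : Prop :=
  ∃ V : FDRep ℂ G, CategoryTheory.Simple V ∧ χ = V.character

/-- `|C_G(ab)b ∩ C_G(a)|`, where `C_G(x)` is the centralizer of `x`. -/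
noncomputable def centInt {G : Type} [Group G] (a b : G) : ℕ :=
  Nat.card {x : G | x * b⁻¹ ∈ Subgroup.centralizer ({a * b} : Set G) ∧
    x ∈ Subgroup.centralizer ({a} : Set G)}

/-- the number of ordered triples `(x,y,z)` with `[x,y] = [x,z] = [y,z] = g`,
where `[x,y] = x⁻¹y⁻¹xy`. -/
noncomputable def f3 {G : Type} [Group G] (g : G) : ℕ :=
  Nat.card {t : G × G × G //
    t.1⁻¹ * t.2.1⁻¹ * t.1 * t.2.1 = g ∧
    t.1⁻¹ * t.2.2⁻¹ * t.1 * t.2.2 = g ∧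
    t.2.1⁻¹ * t.2.2⁻¹ * t.2.1 * t.2.2 = g}

open CategoryTheory

section Lemmas

variable {G : Type} [Group G]

/-- number of z with [x,z] = [y,z] = [x,y] -/
noncomputable def Ncnt (x y : G) : ℕ :=
  Nat.card {z : G // x⁻¹ * z⁻¹ * x * z = x⁻¹ * y⁻¹ * x * y ∧
    y⁻¹ * z⁻¹ * y * z = x⁻¹ * y⁻¹ * x * y}

lemma centInt_eq_Ncnt (a b : G) : centInt a b = Ncnt (b * a) b := by
  apply Nat.card_congr
  apply Equiv.subtypeEquiv ((Equiv.mulLeft b).trans (Equiv.mulRight b⁻¹))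
  intro x
  simp only [Equiv.trans_apply, Equiv.coe_mulLeft, Equiv.coe_mulRight,
    Set.mem_setOf_eq, Subgroup.mem_centralizer_iff, Set.mem_singleton_iff,
    forall_eq]
  constructor
  · rintro ⟨h1, h2⟩
    have h1' : x⁻¹ * (a * b) * x = b⁻¹ * (a * b) * b := by
      calc x⁻¹ * (a * b) * x = x⁻¹ * ((a * b) * (x * b⁻¹)) * b := by group
        _ = x⁻¹ * ((x * b⁻¹) * (a * b)) * b := by rw [h1]
        _ = b⁻¹ * (a * b) * b := by group
    have h2' : x⁻¹ * a * x = a := by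
      calc x⁻¹ * a * x = x⁻¹ * (a * x) := by group
        _ = x⁻¹ * (x * a) := by rw [h2]
        _ = a := by group
    have h3' : x⁻¹ * b * x = (x⁻¹ * a * x)⁻¹ * (x⁻¹ * (a * b) * x) := by group
    rw [h1', h2'] at h3'
    constructor
    · calc (b*a)⁻¹ * (b * x * b⁻¹)⁻¹ * (b*a) * (b * x * b⁻¹)
          = (b*a)⁻¹ * b * (x⁻¹ * (a*b) * x) * b⁻¹ := by group
        _ = (b*a)⁻¹ * b * (b⁻¹ * (a*b) * b) * b⁻¹ := by rw [h1']
        _ = (b*a)⁻¹ * b⁻¹ * (b*a) * b := by group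
    · calc b⁻¹ * (b * x * b⁻¹)⁻¹ * b * (b * x * b⁻¹)
          = (x⁻¹ * b * x) * b⁻¹ := by group
        _ = (a⁻¹ * (b⁻¹ * (a*b) * b)) * b⁻¹ := by rw [h3']
        _ = (b*a)⁻¹ * b⁻¹ * (b*a) * b := by group
  · rintro ⟨c1, c2⟩
    have d1 : x⁻¹ * (a * b) * x = b⁻¹ * (a * b) * b := by
      calc x⁻¹ * (a*b) * x
          = b⁻¹ * (b*a) * ((b*a)⁻¹ * (b*x*b⁻¹)⁻¹ * (b*a) * (b*x*b⁻¹)) * b := by group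
        _ = b⁻¹ * (b*a) * ((b*a)⁻¹ * b⁻¹ * (b*a) * b) * b := by rw [c1]
        _ = b⁻¹ * (a*b) * b := by group
    have d2 : x⁻¹ * b * x = a⁻¹ * b⁻¹ * (a*b) * b := by
      calc x⁻¹ * b * x
          = (b⁻¹ * (b*x*b⁻¹)⁻¹ * b * (b*x*b⁻¹)) * b := by group
        _ = ((b*a)⁻¹ * b⁻¹ * (b*a) * b) * b := by rw [c2]
        _ = a⁻¹ * b⁻¹ * (a*b) * b := by group
    have e2 : x⁻¹ * a * x = a := by
      calc x⁻¹ * a * x = (x⁻¹ * (a*b) * x) * (x⁻¹ * b * x)⁻¹ := by group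
        _ = (b⁻¹ * (a*b) * b) * (a⁻¹ * b⁻¹ * (a*b) * b)⁻¹ := by rw [d1, d2]
        _ = a := by group
    constructor
    · calc (a*b) * (x * b⁻¹) = x * (x⁻¹ * (a*b) * x) * b⁻¹ := by group
        _ = x * (b⁻¹ * (a*b) * b) * b⁻¹ := by rw [d1]
        _ = (x * b⁻¹) * (a*b) := by group
    · calc a * x = x * (x⁻¹ * a * x) := by group
        _ = x * a := by rw [e2]

private def conjE (u : G) : G ≃ G :=
  ⟨fun v => u * v * u⁻¹, fun v => u⁻¹ * v * u, fun v => by group, fun v => by group⟩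

lemma f3_conj (u h : G) : f3 (u * h * u⁻¹) = f3 h := by
  apply Nat.card_congr
  have cj : ∀ w v : G, u * w * u⁻¹ = u * v * u⁻¹ → w = v := fun w v e =>
    mul_left_cancel (mul_right_cancel e)
  refine (Equiv.subtypeEquiv ((conjE u).prodCongr ((conjE u).prodCongr (conjE u))) ?_).symm
  rintro ⟨x, y, z⟩
  simp only [Equiv.prodCongr_apply, Prod.map, conjE, Equiv.coe_fn_mk]
  constructor
  · rintro ⟨e1, e2, e3⟩
    refine ⟨?_, ?_, ?_⟩ <;> [rw [← e1]; rw [← e2]; rw [← e3]] <;> group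
  · rintro ⟨e1, e2, e3⟩
    refine ⟨cj _ _ ?_, cj _ _ ?_, cj _ _ ?_⟩ <;> [rw [← e1]; rw [← e2]; rw [← e3]] <;> group

private def swapE : G × G × G ≃ G × G × G :=
  ⟨fun t => (t.2.2, t.2.1, t.1), fun t => (t.2.2, t.2.1, t.1),
   fun ⟨x, y, z⟩ => rfl, fun ⟨x, y, z⟩ => rfl⟩

lemma f3_inv (h : G) : f3 h⁻¹ = f3 h := by
  apply Nat.card_congr
  refine (Equiv.subtypeEquiv (swapE (G := G)) ?_).symm
  rintro ⟨x, y, z⟩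
  simp only [swapE, Equiv.coe_fn_mk]
  constructor
  · rintro ⟨e1, e2, e3⟩
    refine ⟨?_, ?_, ?_⟩ <;> [rw [← e3]; rw [← e2]; rw [← e1]] <;> group
  · rintro ⟨e1, e2, e3⟩
    have : (h⁻¹)⁻¹ = h := inv_inv h
    rw [← this]
    refine ⟨?_, ?_, ?_⟩ <;> [rw [← e3]; rw [← e2]; rw [← e1]] <;> group


lemma sum_centInt [Fintype G] (φ : G → ℂ) :
    ∑ a : G, ∑ b : G, (centInt a b : ℂ) * φ (a⁻¹ * b⁻¹ * a * b)
      = ∑ h : G, (f3 h : ℂ) * φ h := by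
  classical
  have harg : ∀ a b : G, (b*a)⁻¹ * b⁻¹ * (b*a) * b = a⁻¹ * b⁻¹ * a * b := by
    intro a b; group
  have h1 : ∀ a b : G, (centInt a b : ℂ) * φ (a⁻¹ * b⁻¹ * a * b)
      = (Ncnt (b*a) b : ℂ) * φ ((b*a)⁻¹ * b⁻¹ * (b*a) * b) := by
    intro a b; rw [centInt_eq_Ncnt, harg]
  have key : ∀ x y : G, (Ncnt x y : ℂ) * φ (x⁻¹ * y⁻¹ * x * y)
      = ∑ z : G, if (x⁻¹ * z⁻¹ * x * z = x⁻¹ * y⁻¹ * x * y ∧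
          y⁻¹ * z⁻¹ * y * z = x⁻¹ * y⁻¹ * x * y) then φ (x⁻¹ * y⁻¹ * x * y) else 0 := by
    intro x y
    rw [← Finset.sum_filter, Finset.sum_const, Ncnt, Nat.card_eq_fintype_card,
      Fintype.card_subtype, nsmul_eq_mul]
  have collapse : ∀ t : G × G × G,
      (∑ h : G, if (t.1⁻¹ * t.2.1⁻¹ * t.1 * t.2.1 = h ∧ t.1⁻¹ * t.2.2⁻¹ * t.1 * t.2.2 = h ∧
          t.2.1⁻¹ * t.2.2⁻¹ * t.2.1 * t.2.2 = h) then φ h else 0)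
      = (if (t.1⁻¹ * t.2.2⁻¹ * t.1 * t.2.2 = t.1⁻¹ * t.2.1⁻¹ * t.1 * t.2.1 ∧
          t.2.1⁻¹ * t.2.2⁻¹ * t.2.1 * t.2.2 = t.1⁻¹ * t.2.1⁻¹ * t.1 * t.2.1)
          then φ (t.1⁻¹ * t.2.1⁻¹ * t.1 * t.2.1) else 0) := by
    intro t
    rw [Finset.sum_eq_single (t.1⁻¹ * t.2.1⁻¹ * t.1 * t.2.1)]
    · by_cases hc : (t.1⁻¹ * t.2.2⁻¹ * t.1 * t.2.2 = t.1⁻¹ * t.2.1⁻¹ * t.1 * t.2.1 ∧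
          t.2.1⁻¹ * t.2.2⁻¹ * t.2.1 * t.2.2 = t.1⁻¹ * t.2.1⁻¹ * t.1 * t.2.1)
      · rw [if_pos hc, if_pos ⟨rfl, hc⟩]
      · rw [if_neg hc, if_neg (by rintro ⟨-, h2⟩; exact hc h2)]
    · intro h _ hne
      exact if_neg (by rintro ⟨rfl, -⟩; exact hne rfl)
    · intro habs; exact absurd (Finset.mem_univ _) habs
  calc ∑ a : G, ∑ b : G, (centInt a b : ℂ) * φ (a⁻¹ * b⁻¹ * a * b)
      = ∑ a : G, ∑ b : G, (Ncnt (b*a) b : ℂ) * φ ((b*a)⁻¹ * b⁻¹ * (b*a) * b) :=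
        Finset.sum_congr rfl fun a _ => Finset.sum_congr rfl fun b _ => h1 a b
    _ = ∑ b : G, ∑ a : G, (Ncnt (b*a) b : ℂ) * φ ((b*a)⁻¹ * b⁻¹ * (b*a) * b) :=
        Finset.sum_comm
    _ = ∑ b : G, ∑ x : G, (Ncnt x b : ℂ) * φ (x⁻¹ * b⁻¹ * x * b) := by
        refine Finset.sum_congr rfl fun b _ => ?_
        exact Fintype.sum_equiv (Equiv.mulLeft b) _ _ (fun a => rfl)
    _ = ∑ x : G, ∑ y : G, (Ncnt x y : ℂ) * φ (x⁻¹ * y⁻¹ * x * y) := Finset.sum_comm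
    _ = ∑ x : G, ∑ y : G, ∑ z : G, if (x⁻¹ * z⁻¹ * x * z = x⁻¹ * y⁻¹ * x * y ∧
          y⁻¹ * z⁻¹ * y * z = x⁻¹ * y⁻¹ * x * y) then φ (x⁻¹ * y⁻¹ * x * y) else 0 :=
        Finset.sum_congr rfl fun x _ => Finset.sum_congr rfl fun y _ => key x y
    _ = ∑ x : G, ∑ p : G × G, if (x⁻¹ * p.2⁻¹ * x * p.2 = x⁻¹ * p.1⁻¹ * x * p.1 ∧
          p.1⁻¹ * p.2⁻¹ * p.1 * p.2 = x⁻¹ * p.1⁻¹ * x * p.1)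
          then φ (x⁻¹ * p.1⁻¹ * x * p.1) else 0 :=
        Finset.sum_congr rfl fun x _ => (Fintype.sum_prod_type
          (fun p : G × G => if (x⁻¹ * p.2⁻¹ * x * p.2 = x⁻¹ * p.1⁻¹ * x * p.1 ∧
            p.1⁻¹ * p.2⁻¹ * p.1 * p.2 = x⁻¹ * p.1⁻¹ * x * p.1)
            then φ (x⁻¹ * p.1⁻¹ * x * p.1) else 0)).symm
    _ = ∑ t : G × G × G, if (t.1⁻¹ * t.2.2⁻¹ * t.1 * t.2.2 = t.1⁻¹ * t.2.1⁻¹ * t.1 * t.2.1 ∧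
          t.2.1⁻¹ * t.2.2⁻¹ * t.2.1 * t.2.2 = t.1⁻¹ * t.2.1⁻¹ * t.1 * t.2.1)
          then φ (t.1⁻¹ * t.2.1⁻¹ * t.1 * t.2.1) else 0 :=
        (Fintype.sum_prod_type
          (fun t : G × G × G => if (t.1⁻¹ * t.2.2⁻¹ * t.1 * t.2.2 = t.1⁻¹ * t.2.1⁻¹ * t.1 * t.2.1 ∧
            t.2.1⁻¹ * t.2.2⁻¹ * t.2.1 * t.2.2 = t.1⁻¹ * t.2.1⁻¹ * t.1 * t.2.1)
            then φ (t.1⁻¹ * t.2.1⁻¹ * t.1 * t.2.1) else 0)).symm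
    _ = ∑ t : G × G × G, ∑ h : G,
          if (t.1⁻¹ * t.2.1⁻¹ * t.1 * t.2.1 = h ∧ t.1⁻¹ * t.2.2⁻¹ * t.1 * t.2.2 = h ∧
            t.2.1⁻¹ * t.2.2⁻¹ * t.2.1 * t.2.2 = h) then φ h else 0 :=
        (Finset.sum_congr rfl fun t _ => (collapse t).symm)
    _ = ∑ h : G, ∑ t : G × G × G,
          if (t.1⁻¹ * t.2.1⁻¹ * t.1 * t.2.1 = h ∧ t.1⁻¹ * t.2.2⁻¹ * t.1 * t.2.2 = h ∧
            t.2.1⁻¹ * t.2.2⁻¹ * t.2.1 * t.2.2 = h) then φ h else 0 := Finset.sum_comm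
    _ = ∑ h : G, (f3 h : ℂ) * φ h := by
        refine Finset.sum_congr rfl fun h _ => ?_
        rw [← Finset.sum_filter, Finset.sum_const, f3, Nat.card_eq_fintype_card,
          Fintype.card_subtype, nsmul_eq_mul]

lemma hom_comm_apply' {X Y : FDRep ℂ G} (f : X ⟶ Y) (g : G) (v : X) :
    f.hom (X.ρ g v) = Y.ρ g (f.hom v) :=
  congrArg (fun (m : X.V ⟶ Y.V) => m v) (f.comm g)

lemma simple_of_invariant {V : Type} [AddCommGroup V] [Module ℂ V] [FiniteDimensional ℂ V]
    [Nontrivial V] (ρ : Representation ℂ G V)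
    (hs : ∀ p : Submodule ℂ V, (∀ (g : G) v, v ∈ p → ρ g v ∈ p) → p = ⊥ ∨ p = ⊤) :
    Simple (FDRep.of ρ) := by
  constructor
  intro Y f m
  constructor
  · intro hiso h0
    subst h0
    obtain ⟨v, hv⟩ := exists_ne (0 : V)
    have hid : 𝟙 (FDRep.of ρ) = inv (0 : Y ⟶ FDRep.of ρ) ≫ 0 := (IsIso.inv_hom_id _).symm
    rw [Limits.comp_zero] at hid
    have h2 := congrArg (fun (m : FDRep.of ρ ⟶ FDRep.of ρ) => m.hom v) hid
    simp only [Action.id_hom, Action.zero_hom] at h2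
    exact hv h2
  · intro hf
    have hcomm : ∀ (g : G) (w : Y), f.hom (Y.ρ g w) = ρ g (f.hom w) := fun g w =>
      hom_comm_apply' f g w
    have hinj : Function.Injective f.hom.hom.hom := by
      rw [← LinearMap.ker_eq_bot]
      by_contra hk
      obtain ⟨w, hwK, hw0⟩ := Submodule.exists_mem_ne_zero_of_ne_bot hk
      have hKstab : ∀ (g : G) u, u ∈ LinearMap.ker f.hom.hom.hom →
          Y.ρ g u ∈ LinearMap.ker f.hom.hom.hom := by
        intro g u hu
        rw [LinearMap.mem_ker] at hu ⊢
        have h2 : f.hom.hom.hom (Y.ρ g u) = ρ g (f.hom.hom.hom u) := hcomm g u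
        rw [hu, map_zero] at h2
        exact h2
      set K := LinearMap.ker f.hom.hom.hom with hKdef
      let ρK : Representation ℂ G K :=
        { toFun := fun g => (Y.ρ g).restrict (p := K) (q := K) (fun u hu => hKstab g u hu)
          map_one' := by
            apply LinearMap.ext; intro u
            apply Subtype.ext
            simp [LinearMap.restrict_apply]
          map_mul' := by
            intro g h
            apply LinearMap.ext; intro u
            apply Subtype.ext
            show Y.ρ (g * h) u.1 = Y.ρ g (Y.ρ h u.1)
            rw [map_mul]
            rfl }
      let ι : FDRep.of ρK ⟶ Y := ⟨FGModuleCat.ofHom K.subtype, fun g => by ext u; rfl⟩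
      have hι0 : ι ≫ f = 0 := by
        apply Action.Hom.ext
        apply FGModuleCat.hom_ext
        apply LinearMap.ext
        rintro ⟨u, hu⟩
        have hu' : f.hom u = 0 := hu
        exact hu'
      have hι : ι = 0 := by
        apply (cancel_mono f).mp
        rw [hι0, Limits.zero_comp]
      have h3 := congrArg (fun (m : FDRep.of ρK ⟶ Y) => m.hom ⟨w, hwK⟩) hι
      simp only [Action.zero_hom] at h3
      exact hw0 h3
    have hsurj : Function.Surjective f.hom.hom.hom := by
      rw [← LinearMap.range_eq_top]
      have hinv : ∀ (g : G) v, v ∈ LinearMap.range f.hom.hom.hom →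
          ρ g v ∈ LinearMap.range f.hom.hom.hom := by
        rintro g v ⟨u, rfl⟩
        exact ⟨Y.ρ g u, hcomm g u⟩
      rcases hs (LinearMap.range f.hom.hom.hom) hinv with h | h
      · exfalso
        apply hf
        apply Action.Hom.ext
        apply FGModuleCat.hom_ext
        exact LinearMap.range_eq_bot.mp h
      · exact h
    let e : Y.V ≃ₗ[ℂ] (FDRep.of ρ).V :=
      LinearEquiv.ofBijective f.hom.hom.hom ⟨hinj, hsurj⟩
    have hev : ∀ w : Y, e w = f.hom w := fun w => rfl
    let finv : FDRep.of ρ ⟶ Y :=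
      ⟨FGModuleCat.ofHom (e.symm : (FDRep.of ρ).V →ₗ[ℂ] Y.V), by
        intro g
        apply FGModuleCat.hom_ext
        apply LinearMap.ext
        intro v
        apply e.injective
        show e (e.symm (ρ g v)) = e (Y.ρ g (e.symm v))
        rw [e.apply_symm_apply, hev, hcomm g (e.symm v), ← hev, e.apply_symm_apply]⟩
    refine ⟨⟨finv, ?_, ?_⟩⟩
    · apply Action.Hom.ext
      apply FGModuleCat.hom_ext
      apply LinearMap.ext
      intro w
      exact e.symm_apply_apply w
    · apply Action.Hom.ext
      apply FGModuleCat.hom_ext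
      apply LinearMap.ext
      intro v
      exact e.apply_symm_apply v

section CF
variable [Fintype G]

lemma classfun_zero (f : G → ℂ)
    (hconj : ∀ u x : G, f (u * x * u⁻¹) = f x)
    (horth : ∀ V : FDRep ℂ G, Simple V → (∑ x : G, f x * V.character x) = 0) :
    ∀ x, f x = 0 := by
  classical
  haveI : FiniteDimensional ℂ (MonoidAlgebra ℂ G) :=
    LinearEquiv.finiteDimensional ((Finsupp.linearEquivFunOnFinite ℂ ℂ G).symm.trans (MonoidAlgebra.coeffLinearEquiv ℂ).symm)
  set t : (MonoidAlgebra ℂ G) := ∑ x : G, f x • MonoidAlgebra.single x (1 : ℂ) with ht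
  -- t is central
  have hsing : ∀ u : G, t * MonoidAlgebra.single u (1:ℂ)
      = MonoidAlgebra.single u (1:ℂ) * t := by
    intro u
    rw [ht, Finset.sum_mul, Finset.mul_sum]
    simp only [smul_mul_assoc, mul_smul_comm, MonoidAlgebra.single_mul_single,
      one_mul, mul_one]
    refine Fintype.sum_equiv ⟨fun v => u⁻¹ * v * u, fun v => u * v * u⁻¹,
      fun v => by group, fun v => by group⟩ _ _ ?_
    intro x
    simp only [Equiv.coe_fn_mk]
    have h1 : f (u⁻¹ * x * u) = f x := by
      have := hconj u⁻¹ x; rwa [inv_inv] at this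
    rw [h1, show u * (u⁻¹ * x * u) = x * u by group]
  have hcen : ∀ r : (MonoidAlgebra ℂ G), t * r = r * t := by
    intro r
    induction r using MonoidAlgebra.induction_linear with
    | zero => simp
    | add a b ha hb => rw [mul_add, add_mul, ha, hb]
    | single u c =>
      have h1 : (MonoidAlgebra.single u c : (MonoidAlgebra ℂ G)) = c • MonoidAlgebra.single u (1:ℂ) := by
        rw [MonoidAlgebra.smul_single, smul_eq_mul, mul_one]
      rw [h1, mul_smul_comm, smul_mul_assoc, hsing u]
  -- t annihilates every simple submodule of (MonoidAlgebra ℂ G)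
  have hann : ∀ S : Submodule (MonoidAlgebra ℂ G) (MonoidAlgebra ℂ G), IsSimpleModule (MonoidAlgebra ℂ G) S → ∀ s ∈ S, t * s = 0 := by
    intro S hS s hsmem
    haveI := hS
    haveI : Nontrivial S := IsSimpleModule.nontrivial (MonoidAlgebra ℂ G) S
    haveI : FiniteDimensional ℂ S :=
      FiniteDimensional.of_injective (S.subtype.restrictScalars ℂ) Subtype.coe_injective
    have hsm : ∀ (g : G) (c : ℂ) (x : S),
        (MonoidAlgebra.single g (1:ℂ) : (MonoidAlgebra ℂ G)) • (c • x)
          = c • ((MonoidAlgebra.single g (1:ℂ) : (MonoidAlgebra ℂ G)) • x) := by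
      intro g c x
      apply Subtype.ext
      show (MonoidAlgebra.single g (1:ℂ) : (MonoidAlgebra ℂ G)) • (c • (x : (MonoidAlgebra ℂ G)))
        = c • ((MonoidAlgebra.single g (1:ℂ) : (MonoidAlgebra ℂ G)) • (x : (MonoidAlgebra ℂ G)))
      rw [smul_eq_mul, smul_eq_mul, mul_smul_comm]
    let ρS : Representation ℂ G S :=
      { toFun := fun g =>
          { toFun := fun x => (MonoidAlgebra.single g (1:ℂ) : (MonoidAlgebra ℂ G)) • x
            map_add' := fun x y => smul_add _ x y
            map_smul' := fun c x => hsm g c x }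
        map_one' := by
          apply LinearMap.ext; intro x
          show (MonoidAlgebra.single (1:G) (1:ℂ) : (MonoidAlgebra ℂ G)) • x = x
          rw [← MonoidAlgebra.one_def, one_smul]
        map_mul' := by
          intro g h
          apply LinearMap.ext; intro x
          show (MonoidAlgebra.single (g*h) (1:ℂ) : (MonoidAlgebra ℂ G)) • x
            = (MonoidAlgebra.single g (1:ℂ) : (MonoidAlgebra ℂ G)) • ((MonoidAlgebra.single h (1:ℂ) : (MonoidAlgebra ℂ G)) • x)
          rw [← mul_smul, MonoidAlgebra.single_mul_single, one_mul] }
    haveI hsimple : Simple (FDRep.of ρS) := by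
      apply simple_of_invariant
      intro p hp
      let q : Submodule (MonoidAlgebra ℂ G) S :=
        { carrier := ↑p
          add_mem' := fun ha hb => p.add_mem ha hb
          zero_mem' := p.zero_mem
          smul_mem' := by
            intro r m hm
            induction r using MonoidAlgebra.induction_linear with
            | zero => rw [zero_smul]; exact p.zero_mem
            | add a b ha hb => rw [add_smul]; exact p.add_mem ha hb
            | single u c =>
              have h2 : (MonoidAlgebra.single u c : (MonoidAlgebra ℂ G)) • m
                  = c • ((MonoidAlgebra.single u (1:ℂ) : (MonoidAlgebra ℂ G)) • m) := by
                rw [show (MonoidAlgebra.single u c : (MonoidAlgebra ℂ G)) = c • MonoidAlgebra.single u (1:ℂ) by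
                  rw [MonoidAlgebra.smul_single, smul_eq_mul, mul_one], smul_assoc]
              rw [h2]
              exact p.smul_mem c (hp u m hm) }
      rcases eq_bot_or_eq_top q with hq | hq
      · left
        rw [Submodule.eq_bot_iff] at hq ⊢
        exact fun x hx => hq x hx
      · right
        rw [Submodule.eq_top_iff'] at hq ⊢
        exact fun x => hq x
    have htr : ∑ x : G, f x * LinearMap.trace ℂ S (ρS x) = 0 := horth (FDRep.of ρS) hsimple
    let φ : Module.End ℂ S := ∑ x : G, f x • (ρS x)
    have hφapply : ∀ x : S, φ x = t • x := by
      intro x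
      show (∑ y : G, f y • (ρS y)) x = t • x
      rw [LinearMap.sum_apply, ht, Finset.sum_smul]
      refine Finset.sum_congr rfl fun y _ => ?_
      rw [LinearMap.smul_apply, smul_assoc]
      rfl
    have hφtr : LinearMap.trace ℂ S φ = 0 := by
      show LinearMap.trace ℂ S (∑ y : G, f y • (ρS y)) = 0
      rw [map_sum, ← htr]
      refine Finset.sum_congr rfl fun y _ => ?_
      rw [map_smul, smul_eq_mul]
    obtain ⟨μ, hμ⟩ := Module.End.exists_eigenvalue φ
    obtain ⟨v, hv⟩ := hμ.exists_hasEigenvector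
    have hveq : t • v = μ • v := by rw [← hφapply]; exact Module.End.mem_eigenspace_iff.mp hv.1
    have hsmulc : ∀ (r : (MonoidAlgebra ℂ G)) (x : S), r • (μ • x) = μ • (r • x) := by
      intro r x
      apply Subtype.ext
      show (r : (MonoidAlgebra ℂ G)) • (μ • (x : (MonoidAlgebra ℂ G))) = μ • (r • (x : (MonoidAlgebra ℂ G)))
      rw [smul_eq_mul, smul_eq_mul, mul_smul_comm]
    let q2 : Submodule (MonoidAlgebra ℂ G) S :=
      { carrier := {x : S | t • x = μ • x}
        add_mem' := by
          intro a b ha hb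
          show t • (a + b) = μ • (a + b)
          rw [smul_add, smul_add]
          rw [show t • a = μ • a from ha, show t • b = μ • b from hb]
        zero_mem' := by show t • (0:S) = μ • (0:S); rw [smul_zero, smul_zero]
        smul_mem' := by
          intro r x hx
          show t • (r • x) = μ • (r • x)
          calc t • (r • x) = (t * r) • x := (mul_smul t r x).symm
            _ = (r * t) • x := by rw [hcen r]
            _ = r • (t • x) := mul_smul r t x
            _ = r • (μ • x) := by rw [show t • x = μ • x from hx]
            _ = μ • (r • x) := hsmulc r x }
    have hq2 : q2 = ⊤ := by
      rcases eq_bot_or_eq_top q2 with hq | hq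
      · exfalso
        apply hv.2
        have hvq : v ∈ q2 := hveq
        rw [hq] at hvq
        exact hvq
      · exact hq
    have hall : ∀ x : S, t • x = μ • x := by
      intro x
      have hx : x ∈ q2 := by rw [hq2]; trivial
      exact hx
    have hμ0 : μ = 0 := by
      have h1 : φ = μ • (LinearMap.id : S →ₗ[ℂ] S) := by
        apply LinearMap.ext; intro x
        rw [hφapply, hall x]
        rfl
      have h2 : LinearMap.trace ℂ S φ = μ * (Module.finrank ℂ S : ℂ) := by
        rw [h1, map_smul, LinearMap.trace_id, smul_eq_mul]
      rw [hφtr] at h2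
      have h3 : (Module.finrank ℂ S : ℂ) ≠ 0 :=
        Nat.cast_ne_zero.mpr (Module.finrank_pos).ne'
      exact (mul_eq_zero.mp h2.symm).resolve_right h3
    have h4 := hall ⟨s, hsmem⟩
    rw [hμ0, zero_smul] at h4
    have h5 := congrArg Subtype.val h4
    simpa using h5
  -- t = 0 via semisimplicity
  haveI : NeZero ((Fintype.card G : ℂ)) := ⟨Nat.cast_ne_zero.mpr Fintype.card_ne_zero⟩
  let N : Submodule (MonoidAlgebra ℂ G) (MonoidAlgebra ℂ G) :=
    { carrier := {x : (MonoidAlgebra ℂ G) | t * x = 0}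
      add_mem' := by
        intro a b ha hb
        show t * (a + b) = 0
        rw [mul_add, show t * a = 0 from ha, show t * b = 0 from hb, add_zero]
      zero_mem' := by show t * 0 = 0; rw [mul_zero]
      smul_mem' := by
        intro r x hx
        show t * (r • x) = 0
        rw [smul_eq_mul, ← mul_assoc, hcen r, mul_assoc, show t * x = 0 from hx, mul_zero] }
  have hN : (⊤ : Submodule (MonoidAlgebra ℂ G) (MonoidAlgebra ℂ G)) ≤ N := by
    rw [← IsSemisimpleModule.sSup_simples_eq_top (MonoidAlgebra ℂ G) (MonoidAlgebra ℂ G)]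
    apply sSup_le
    rintro S hS
    intro s hsmem
    exact hann S hS s hsmem
  have ht0 : t = 0 := by
    have h1 : (1 : (MonoidAlgebra ℂ G)) ∈ N := hN trivial
    have h2 : t * 1 = 0 := h1
    rwa [mul_one] at h2
  intro x
  have h6 : t.coeff x = f x := by
    rw [ht, MonoidAlgebra.coeff_sum, Finset.sum_apply']
    rw [Finset.sum_eq_single x]
    · rw [MonoidAlgebra.coeff_smul, MonoidAlgebra.coeff_single, Finsupp.smul_apply, Finsupp.single_apply, if_pos rfl, smul_eq_mul, mul_one]
    · intro y _ hy
      rw [MonoidAlgebra.coeff_smul, MonoidAlgebra.coeff_single, Finsupp.smul_apply, Finsupp.single_apply, if_neg hy, smul_zero]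
    · intro h; exact absurd (Finset.mem_univ _) h
  rw [ht0] at h6
  simpa using h6.symm

end CF

end Lemmas

section Orth
variable {G : Type} [Group G]
variable [Fintype G]

open scoped Classical in
lemma char_orth (V W : FDRep ℂ G) [Simple V] [Simple W] :
    (∑ x : G, V.character x * W.character x⁻¹)
      = if V.character = W.character then (Fintype.card G : ℂ) else 0 := by
  letI hfg : Fintype G := ‹Fintype G›
  haveI : Invertible ((Fintype.card G : ℂ)) :=
    invertibleOfNonzero (Nat.cast_ne_zero.mpr Fintype.card_ne_zero)
  have horth : ∀ (V' W' : FDRep ℂ G) [Simple V'] [Simple W'],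
      (∑ x : G, V'.character x * W'.character x⁻¹)
        = if Nonempty (V' ≅ W') then (Fintype.card G : ℂ) else 0 := by
    intro V' W' _ _
    have h := FDRep.char_orthonormal (k := ℂ) (G := G) V' W'
    have h2 := congrArg (fun z => (Fintype.card G : ℂ) * z) h
    simp only [smul_eq_mul, Nat.card_eq_fintype_card, ← mul_assoc, mul_inv_cancel_of_invertible, one_mul] at h2
    have h3 : (∑ x : G, V'.character x * W'.character x⁻¹)
        = (Fintype.card G : ℂ) * if Nonempty (V' ≅ W') then 1 else 0 := h2
    have hsum : (∑ x : G, V'.character x * W'.character x⁻¹)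
        = ∑ x : G, V'.character x * W'.character x⁻¹ :=
      Fintype.sum_equiv (show G ≃ G from Equiv.refl G) _ _ (fun x => rfl)
    rw [hsum.symm.trans h3]
    split_ifs <;> simp
  have hcard : (Fintype.card G : ℂ) = (Fintype.card G : ℂ) := by
    rw [Fintype.card_congr (show G ≃ G from Equiv.refl G)]
  rcases Classical.em (V.character = W.character) with hEq | hNe
  · have hiso : Nonempty (V ≅ W) := by
      by_contra hne
      have h1 := horth V W
      rw [if_neg hne] at h1
      rw [hEq] at h1
      have h2 := horth W W
      rw [if_pos ⟨Iso.refl W⟩] at h2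
      rw [h1] at h2
      rw [hcard] at h2
      exact (Nat.cast_ne_zero.mpr Fintype.card_ne_zero) h2.symm
    rw [if_pos hEq, horth V W, if_pos hiso, hcard]
  · rw [if_neg hNe, horth V W, if_neg ?_]
    rintro ⟨i⟩
    exact hNe (FDRep.char_iso i)

end Orth

theorem stmt0 {G : Type} [Group G] [Fintype G]
    (Irr : Finset (G → ℂ)) (hIrr : ∀ χ, χ ∈ Irr ↔ IsIrredChar G χ) (g : G) :
    (f3 g : ℂ) = (1 / (Fintype.card G : ℂ)) *
      ∑ χ ∈ Irr, (∑ a : G, ∑ b : G,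
        (centInt a b : ℂ) * χ (a⁻¹ * b⁻¹ * a * b)) * χ g := by
  classical
  set n := (Fintype.card G : ℂ) with hn
  have hn0 : n ≠ 0 := Nat.cast_ne_zero.mpr Fintype.card_ne_zero
  set F : G → ℂ := fun h => (f3 h : ℂ) with hF
  set c : (G → ℂ) → ℂ := fun χ => ∑ h : G, F h * χ h with hc
  set f : G → ℂ := fun x => F x⁻¹ - (1/n) * ∑ χ ∈ Irr, c χ * χ x⁻¹ with hf
  have hF_conj : ∀ u x : G, F (u * x * u⁻¹) = F x := by
    intro u x
    show ((f3 (u * x * u⁻¹) : ℕ) : ℂ) = _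
    rw [f3_conj u x]
  have hF_inv : ∀ x : G, F x⁻¹ = F x := by
    intro x
    show ((f3 x⁻¹ : ℕ) : ℂ) = _
    rw [f3_inv x]
  have hχconj : ∀ χ ∈ Irr, ∀ u x : G, χ (u * x * u⁻¹) = χ x := by
    intro χ hχ u x
    obtain ⟨V, hV, rfl⟩ := (hIrr χ).mp hχ
    exact FDRep.char_conj V x u
  have hconj : ∀ u x : G, f (u * x * u⁻¹) = f x := by
    intro u x
    show F (u * x * u⁻¹)⁻¹ - (1/n) * ∑ χ ∈ Irr, c χ * χ (u * x * u⁻¹)⁻¹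
      = F x⁻¹ - (1/n) * ∑ χ ∈ Irr, c χ * χ x⁻¹
    have h1 : (u * x * u⁻¹)⁻¹ = u * x⁻¹ * u⁻¹ := by group
    rw [h1, hF_conj]
    have h2 : ∀ χ ∈ Irr, c χ * χ (u * x⁻¹ * u⁻¹) = c χ * χ x⁻¹ := by
      intro χ hχ
      rw [hχconj χ hχ u x⁻¹]
    rw [Finset.sum_congr rfl h2]
  have horth : ∀ V : FDRep ℂ G, Simple V → (∑ x : G, f x * V.character x) = 0 := by
    intro V hV
    haveI := hV
    have hVmem : V.character ∈ Irr := (hIrr _).mpr ⟨V, hV, rfl⟩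
    have hpick : ∀ χ ∈ Irr, (∑ x : G, V.character x * χ x⁻¹)
        = if V.character = χ then n else 0 := by
      intro χ hχ
      obtain ⟨W, hW, rfl⟩ := (hIrr χ).mp hχ
      haveI := hW
      exact char_orth V W
    have hsplit : (∑ x : G, f x * V.character x)
        = (∑ x : G, F x⁻¹ * V.character x)
          - (1/n) * ∑ x : G, (∑ χ ∈ Irr, c χ * χ x⁻¹) * V.character x := by
      rw [Finset.mul_sum, ← Finset.sum_sub_distrib]
      refine Finset.sum_congr rfl fun x _ => ?_
      show (F x⁻¹ - (1/n) * ∑ χ ∈ Irr, c χ * χ x⁻¹) * V.character x = _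
      ring
    rw [hsplit]
    have hfirst : (∑ x : G, F x⁻¹ * V.character x) = c V.character := by
      rw [hc]
      refine Finset.sum_congr rfl fun x _ => ?_
      rw [hF_inv]
    have hsecond : (∑ x : G, (∑ χ ∈ Irr, c χ * χ x⁻¹) * V.character x)
        = c V.character * n := by
      calc ∑ x : G, (∑ χ ∈ Irr, c χ * χ x⁻¹) * V.character x
          = ∑ x : G, ∑ χ ∈ Irr, c χ * χ x⁻¹ * V.character x :=
            Finset.sum_congr rfl fun x _ => Finset.sum_mul _ _ _
        _ = ∑ χ ∈ Irr, ∑ x : G, c χ * χ x⁻¹ * V.character x := Finset.sum_comm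
        _ = ∑ χ ∈ Irr, c χ * ∑ x : G, V.character x * χ x⁻¹ := by
            refine Finset.sum_congr rfl fun χ _ => ?_
            rw [Finset.mul_sum]
            exact Finset.sum_congr rfl fun x _ => by ring
        _ = ∑ χ ∈ Irr, c χ * (if V.character = χ then n else 0) := by
            refine Finset.sum_congr rfl fun χ hχ => ?_
            rw [hpick χ hχ]
        _ = c V.character * n := by
            rw [Finset.sum_eq_single V.character]
            · rw [if_pos rfl]
            · intro χ _ hne
              rw [if_neg (fun hh => hne hh.symm), mul_zero]
            · intro hmem; exact absurd hVmem hmem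
    rw [hfirst, hsecond]
    have hcancel : (1/n) * (c V.character * n) = c V.character := by
      field_simp
    rw [hcancel, sub_self]
  have hzero := classfun_zero f hconj horth
  have key : ∀ x : G, F x⁻¹ = (1/n) * ∑ χ ∈ Irr, c χ * χ x⁻¹ := fun x =>
    sub_eq_zero.mp (hzero x)
  have hg := key g⁻¹
  rw [inv_inv] at hg
  calc F g = (1/n) * ∑ χ ∈ Irr, c χ * χ g := hg
    _ = (1/n) * ∑ χ ∈ Irr, (∑ a : G, ∑ b : G,
          (centInt a b : ℂ) * χ (a⁻¹ * b⁻¹ * a * b)) * χ g := by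
        congr 1
        refine Finset.sum_congr rfl fun χ _ => ?_
        rw [sum_centInt χ]
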